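/- Let N ∈ ℕ, let μ_i > 0 and b_i > 0 for 0 ≤ i ≤ N, and let h_i > 0 for 0 ≤ i ≤ N. Then for every g : {0,…,N+1} → ℝ with g_{N+1} = 0, one has ∑_{i=0}^N μ_i g_i² ≤ (∑_{j=0}^N μ_j b_j (g_{j+1} − g_j)²) · max_{0≤j≤N} [ (1/h_j) ∑_{i=0}^j μ_i ∑_{k=i}^N h_k/(μ_k b_k) ]. -/

import Mathlib

open Finset

lemma telescope_aux (g : ℕ → ℝ) (i : ℕ) : ∀ N, i ≤ N →
    ∑ k ∈ Finset.Icc i N, (g k - g (k + 1)) = g i - g (N + 1) := by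
  intro N
  induction N with
  | zero => intro hi; interval_cases i; simp
  | succ n ih =>
    intro hi
    rcases Nat.lt_or_ge i (n + 1) with hlt | hge
    · rw [Finset.sum_Icc_succ_top (by omega), ih (by omega)]; ring
    · have : i = n + 1 := by omega
      subst this; simp

/-- Weighted Cauchy–Schwarz (discrete Hardy-type) estimate: for a birth–death
chain with weights `μ`, rates `b`, auxiliary positive weights `h`, and any
`g` with `g (N+1) = 0`, the weighted `ℓ²` norm of `g` is bounded by the
Dirichlet form times the maximum of the double-sum quantity. -/
theorem stmt_0 (N : ℕ) (μ b h g : ℕ → ℝ)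
    (hμ : ∀ i ≤ N, 0 < μ i) (hb : ∀ i ≤ N, 0 < b i) (hh : ∀ i ≤ N, 0 < h i)
    (hg : g (N + 1) = 0) :
    ∑ i ∈ Finset.range (N + 1), μ i * g i ^ 2 ≤
      (∑ j ∈ Finset.range (N + 1), μ j * b j * (g (j + 1) - g j) ^ 2) *
        (Finset.range (N + 1)).sup' ⟨0, Finset.mem_range.mpr (Nat.succ_pos N)⟩
          (fun j => (1 / h j) *
            ∑ i ∈ Finset.range (j + 1), μ i * ∑ k ∈ Finset.Icc i N, h k / (μ k * b k)) := by
  set S : ℕ → ℝ := fun i => ∑ k ∈ Finset.Icc i N, h k / (μ k * b k) with hS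
  set T : ℕ → ℝ := fun k => μ k * b k * (g (k + 1) - g k) ^ 2 / h k with hT
  set M : ℝ := (Finset.range (N + 1)).sup' ⟨0, Finset.mem_range.mpr (Nat.succ_pos N)⟩
          (fun j => (1 / h j) * ∑ i ∈ Finset.range (j + 1), μ i * S i) with hM
  -- Step A: pointwise Cauchy–Schwarz
  have stepA : ∀ i ∈ Finset.range (N + 1),
      μ i * g i ^ 2 ≤ μ i * (S i * ∑ k ∈ Finset.Icc i N, T k) := by
    intro i hi
    rw [Finset.mem_range, Nat.lt_succ_iff] at hi
    refine mul_le_mul_of_nonneg_left ?_ (hμ i hi).le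
    have hgi : g i = ∑ k ∈ Finset.Icc i N, (g k - g (k + 1)) := by
      rw [telescope_aux g i N hi, hg, sub_zero]
    have key : ∀ k ∈ Finset.Icc i N,
        g k - g (k + 1) = Real.sqrt (h k / (μ k * b k)) *
          ((g k - g (k + 1)) / Real.sqrt (h k / (μ k * b k))) := by
      intro k hk
      rw [Finset.mem_Icc] at hk
      have hw : (0:ℝ) < h k / (μ k * b k) :=
        div_pos (hh k hk.2) (mul_pos (hμ k hk.2) (hb k hk.2))
      field_simp
    calc g i ^ 2 = (∑ k ∈ Finset.Icc i N, Real.sqrt (h k / (μ k * b k)) *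
          ((g k - g (k + 1)) / Real.sqrt (h k / (μ k * b k)))) ^ 2 := by
          rw [hgi, Finset.sum_congr rfl key]
      _ ≤ (∑ k ∈ Finset.Icc i N, Real.sqrt (h k / (μ k * b k)) ^ 2) *
          ∑ k ∈ Finset.Icc i N, ((g k - g (k + 1)) / Real.sqrt (h k / (μ k * b k))) ^ 2 :=
          Finset.sum_mul_sq_le_sq_mul_sq _ _ _
      _ = S i * ∑ k ∈ Finset.Icc i N, T k := by
          congr 1
          · refine Finset.sum_congr rfl fun k hk => ?_
            rw [Finset.mem_Icc] at hk
            exact Real.sq_sqrt (div_pos (hh k hk.2) (mul_pos (hμ k hk.2) (hb k hk.2))).le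
          · refine Finset.sum_congr rfl fun k hk => ?_
            rw [Finset.mem_Icc] at hk
            have hw : (0:ℝ) < h k / (μ k * b k) :=
              div_pos (hh k hk.2) (mul_pos (hμ k hk.2) (hb k hk.2))
            rw [div_pow, Real.sq_sqrt hw.le, hT]
            have hh' := (hh k hk.2).ne'
            have hμ' := (hμ k hk.2).ne'
            have hb' := (hb k hk.2).ne'
            field_simp
            ring
  have step1 : ∑ i ∈ Finset.range (N + 1), μ i * g i ^ 2 ≤
      ∑ i ∈ Finset.range (N + 1), ∑ k ∈ Finset.Icc i N, μ i * S i * T k := by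
    refine Finset.sum_le_sum fun i hi => ?_
    refine (stepA i hi).trans_eq ?_
    simp [Finset.mul_sum, mul_assoc]
  -- Step B: swap the order of summation
  have swap : ∑ i ∈ Finset.range (N + 1), ∑ k ∈ Finset.Icc i N, μ i * S i * T k =
      ∑ k ∈ Finset.range (N + 1), ∑ i ∈ Finset.range (k + 1), μ i * S i * T k := by
    have l1 : ∀ i, Finset.Icc i N = (Finset.range (N + 1)).filter (fun k => i ≤ k) := by
      intro i; ext k; simp [Nat.lt_succ_iff]; omega
    have l2 : ∀ k ∈ Finset.range (N + 1),
        Finset.range (k + 1) = (Finset.range (N + 1)).filter (fun i => i ≤ k) := by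
      intro k hk; rw [Finset.mem_range] at hk; ext i; simp [Nat.lt_succ_iff]; omega
    calc ∑ i ∈ Finset.range (N + 1), ∑ k ∈ Finset.Icc i N, μ i * S i * T k
        = ∑ i ∈ Finset.range (N + 1), ∑ k ∈ Finset.range (N + 1),
            if i ≤ k then μ i * S i * T k else 0 := by
          refine Finset.sum_congr rfl fun i _ => ?_
          rw [l1 i, Finset.sum_filter]
      _ = ∑ k ∈ Finset.range (N + 1), ∑ i ∈ Finset.range (N + 1),
            if i ≤ k then μ i * S i * T k else 0 := Finset.sum_comm
      _ = ∑ k ∈ Finset.range (N + 1), ∑ i ∈ Finset.range (k + 1), μ i * S i * T k := by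
          refine Finset.sum_congr rfl fun k hk => ?_
          rw [l2 k hk, Finset.sum_filter]
  -- Step C: bound each term by M
  have stepC : ∑ k ∈ Finset.range (N + 1), ∑ i ∈ Finset.range (k + 1), μ i * S i * T k ≤
      ∑ k ∈ Finset.range (N + 1), μ k * b k * (g (k + 1) - g k) ^ 2 * M := by
    refine Finset.sum_le_sum fun k hk => ?_
    have hkN : k ≤ N := by rw [Finset.mem_range] at hk; omega
    have hMk : (1 / h k) * ∑ i ∈ Finset.range (k + 1), μ i * S i ≤ M := by
      rw [hM]
      exact Finset.le_sup' (fun j => (1 / h j) * ∑ i ∈ Finset.range (j + 1), μ i * S i) hk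
    have hterm : ∑ i ∈ Finset.range (k + 1), μ i * S i * T k =
        μ k * b k * (g (k + 1) - g k) ^ 2 *
          ((1 / h k) * ∑ i ∈ Finset.range (k + 1), μ i * S i) := by
      rw [← Finset.sum_mul, hT]
      have hh' := (hh k hkN).ne'
      field_simp
    rw [hterm]
    exact mul_le_mul_of_nonneg_left hMk
      (mul_nonneg (mul_nonneg (hμ k hkN).le (hb k hkN).le) (sq_nonneg _))
  calc ∑ i ∈ Finset.range (N + 1), μ i * g i ^ 2
      ≤ ∑ k ∈ Finset.range (N + 1), μ k * b k * (g (k + 1) - g k) ^ 2 * M := by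
        rw [swap] at step1; exact le_trans step1 stepC
    _ = (∑ j ∈ Finset.range (N + 1), μ j * b j * (g (j + 1) - g j) ^ 2) * M :=
        (Finset.sum_mul _ _ _).symm
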